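/- For every run u of the Minsky machine A there exists a finite word w such that w satisfies ψ_Minsky := ψ_enc-basics ∧ ψ_P3 ∧ ψ_P4 and run(w) = u. -/

import Mathlib

/- STATEMENT 15: Every run of the Minsky machine is encoded by some model of ψ_Minsky. -/

namespace Minsky15

abbrev Word := List (Set ℕ)

inductive Formula where
  | atom (a : ℕ)
  | neg (φ : Formula)
  | conj (φ ψ : Formula)
  | fut (φ : Formula)
  | half (φ : Formula)

def Sat (w : Word) : ℕ → Formula → Prop
  | i, .atom a => a ∈ w.getD i ∅
  | i, .neg φ => ¬ Sat w i φ
  | i, .conj φ ψ => Sat w i φ ∧ Sat w i ψ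
  | i, .fut φ => ∃ j, i ≤ j ∧ j < w.length ∧ Sat w j φ
  | i, .half φ => 2 * Set.ncard {j | j < i ∧ Sat w j φ} = i

def fdisj (φ ψ : Formula) : Formula := .neg (.conj (.neg φ) (.neg ψ))
def fimpl (φ ψ : Formula) : Formula := fdisj (.neg φ) ψ
def fiff (φ ψ : Formula) : Formula := .conj (fimpl φ ψ) (fimpl ψ φ)
def G (φ : Formula) : Formula := .neg (.fut (.neg φ))
def ftop : Formula := .neg (.conj (.atom 0) (.neg (.atom 0)))
def fbot : Formula := .conj (.atom 0) (.neg (.atom 0))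
def bigConj (l : List Formula) : Formula := l.foldr .conj ftop
def bigDisj (l : List Formula) : Formula := l.foldr fdisj fbot

def φinit (wht shdw : ℕ) : Formula :=
  .conj (.atom wht)
    (.conj (G (fiff (.atom wht) (.neg (.atom shdw))))
           (G (fimpl (.atom wht) (.fut (.atom shdw)))))

/-- `ψ_shadowy`, defining shadowy words. -/
def ψshadowy (wht shdw : ℕ) : Formula :=
  .conj (φinit wht shdw) (G (fiff (.half (.atom wht)) (.atom wht)))

def φlast (shdw : ℕ) : Formula := G (.atom shdw)
def φstl (wht shdw : ℕ) : Formula := .conj (.atom wht) (G (fdisj (.atom wht) (φlast shdw)))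

/-- `φ_transfer^{σ,σ̃}`. -/
def φtransfer (wht shdw σ σt : ℕ) : Formula :=
  .conj (ψshadowy wht shdw)
    (.conj (G (fimpl (.atom σ) (.atom wht)))
      (.conj (G (fimpl (.atom σt) (.atom shdw)))
        (.conj (G (fimpl (.atom wht)
                    (.half (fdisj (.conj (.atom wht) (.atom σ))
                                  (.conj (.atom shdw) (.neg (.atom σt)))))))
               (fiff (.fut (.conj (φstl wht shdw) (.atom σ)))
                     (.fut (.conj (φlast shdw) (.atom σt)))))))

/-- Counter values: zero or positive. -/
inductive CV where
  | zero | plus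
deriving DecidableEq

/-- Counter operations: decrement, no-op, increment. -/
inductive Op where
  | dec | nop | inc
deriving DecidableEq

def opVal : Op → ℤ
  | .dec => -1
  | .nop => 0
  | .inc => 1

/-- A deterministic Minsky machine with state space `Q`. -/
structure Minsky (Q : Type) where
  q0 : Q
  δ : Q → CV → CV → Op × Op × Q
  dec_fst : ∀ q f s, (δ q f s).1 = Op.dec → f = CV.plus
  dec_snd : ∀ q f s, (δ q f s).2.1 = Op.dec → s = CV.plus
  ne_self : ∀ q f s, (δ q f s).2.2 ≠ q
  ne_init : ∀ q f s, (δ q f s).2.2 ≠ q0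

/-- A letter of a run: `(q, f, s, f̄, s̄, q_N)`. -/
structure Config (Q : Type) where
  q : Q
  f : CV
  s : CV
  fo : Op
  so : Op
  qn : Q

variable {Q : Type}

def dflt (M : Minsky Q) : Config Q := ⟨M.q0, CV.zero, CV.zero, Op.nop, Op.nop, M.q0⟩

/-- (P1) the run starts in the initial state with both counters empty. -/
def P1 (M : Minsky Q) (u : List (Config Q)) : Prop :=
  (u.getD 0 (dflt M)).q = M.q0 ∧ (u.getD 0 (dflt M)).f = CV.zero ∧
    (u.getD 0 (dflt M)).s = CV.zero

/-- (P2) every letter is consistent with the transition function. -/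
def P2 (M : Minsky Q) (u : List (Config Q)) : Prop :=
  ∀ i < u.length,
    M.δ (u.getD i (dflt M)).q (u.getD i (dflt M)).f (u.getD i (dflt M)).s =
      ((u.getD i (dflt M)).fo, (u.getD i (dflt M)).so, (u.getD i (dflt M)).qn)

/-- (P3) the target state of each letter is the source state of the next one. -/
def P3 (M : Minsky Q) (u : List (Config Q)) : Prop :=
  ∀ i, i + 1 < u.length → (u.getD i (dflt M)).qn = (u.getD (i + 1) (dflt M)).q

/-- (P4) the zero/positive flags are consistent with the accumulated operations. -/
def P4 (M : Minsky Q) (u : List (Config Q)) : Prop :=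
  ∀ i < u.length,
    ((u.getD i (dflt M)).f = CV.zero ↔
      (∑ j ∈ Finset.range i, opVal (u.getD j (dflt M)).fo) = 0) ∧
    ((u.getD i (dflt M)).s = CV.zero ↔
      (∑ j ∈ Finset.range i, opVal (u.getD j (dflt M)).so) = 0)

/-- A run of the Minsky machine `M`. -/
def IsRun (M : Minsky Q) (u : List (Config Q)) : Prop :=
  u ≠ [] ∧ P1 M u ∧ P2 M u ∧ P3 M u ∧ P4 M u

/-- Tags for the letters of the alphabet Σ_M. -/
inductive Tag (Q : Type) where
  | fr (q : Q)
  | to (q : Q)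
  | c1 (c : CV)
  | c2 (c : CV)
  | i1 (o : Op)
  | i2 (o : Op)

/-- An assignment of pairwise distinct atomic propositions to `wht`, `shdw`, the
letters of Σ_M, together with an injective map `σ ↦ σ̃` into fresh letters. -/
structure Letters (Q : Type) where
  wht : ℕ
  shdw : ℕ
  ltr : Tag Q → ℕ
  tilde : ℕ → ℕ
  wht_ne_shdw : wht ≠ shdw
  ltr_inj : Function.Injective ltr
  ltr_ne_wht : ∀ t, ltr t ≠ wht
  ltr_ne_shdw : ∀ t, ltr t ≠ shdw
  tilde_inj : ∀ t t', tilde (ltr t) = tilde (ltr t') → ltr t = ltr t'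
  tilde_ne_ltr : ∀ t t', tilde (ltr t) ≠ ltr t'
  tilde_ne_wht : ∀ t, tilde (ltr t) ≠ wht
  tilde_ne_shdw : ∀ t, tilde (ltr t) ≠ shdw

def cvList : List CV := [CV.zero, CV.plus]
def opList : List Op := [Op.dec, Op.nop, Op.inc]

/-- The list of all tags (Σ_M up to the letter assignment). -/
noncomputable def tagList (Q : Type) [Fintype Q] : List (Tag Q) :=
  (Finset.univ.toList (α := Q)).map Tag.fr ++
  (Finset.univ.toList (α := Q)).map Tag.to ++
  cvList.map Tag.c1 ++ cvList.map Tag.c2 ++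
  opList.map Tag.i1 ++ opList.map Tag.i2

/-- The alphabet Σ_M, as a list of atomic propositions. -/
noncomputable def SigMlist [Fintype Q] (L : Letters Q) : List ℕ := (tagList Q).map L.ltr

/-- `ψ^{truly-Σ_M}_shadowy`. -/
noncomputable def ψtruly [Fintype Q] (L : Letters Q) : Formula :=
  bigConj (ψshadowy L.wht L.shdw ::
    (SigMlist L).map (fun σ => φtransfer L.wht L.shdw σ (L.tilde σ)))

/-- `ψ_P1 := from_{q0} ∧ c1_0 ∧ c2_0`. -/
def ψP1 (M : Minsky Q) (L : Letters Q) : Formula :=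
  .conj (.atom (L.ltr (Tag.fr M.q0)))
    (.conj (.atom (L.ltr (Tag.c1 CV.zero))) (.atom (L.ltr (Tag.c2 CV.zero))))

/-- The first conjunct of `ψ_P2`: every white position carries a transition of `δ`. -/
noncomputable def ψP2a [Fintype Q] (M : Minsky Q) (L : Letters Q) : Formula :=
  G (fimpl (.atom L.wht)
    (bigDisj ((Finset.univ.toList (α := Q)).flatMap (fun q =>
      cvList.flatMap (fun f => cvList.map (fun s =>
        bigConj [Formula.atom (L.ltr (Tag.fr q)),
                 Formula.atom (L.ltr (Tag.c1 f)),
                 Formula.atom (L.ltr (Tag.c2 s)),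
                 Formula.atom (L.ltr (Tag.i1 (M.δ q f s).1)),
                 Formula.atom (L.ltr (Tag.i2 (M.δ q f s).2.1)),
                 Formula.atom (L.ltr (Tag.to (M.δ q f s).2.2))]))))))

/-- The second conjunct of `ψ_P2`: no position carries seven pairwise different
letters of Σ_M. -/
noncomputable def ψP2b [Fintype Q] (L : Letters Q) : Formula :=
  G (bigConj ((((SigMlist L).sublistsLen 7).map
      (fun l => Formula.neg (bigConj (l.map Formula.atom))))))

noncomputable def ψencBasics [Fintype Q] (M : Minsky Q) (L : Letters Q) : Formula :=
  .conj (ψtruly L) (.conj (ψP1 M L) (.conj (ψP2a M L) (ψP2b L)))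

/-- `φ^=_{α,β} := Half([wht ∧ α] ∨ [shdw ∧ ¬β̃])`. -/
def φeq (L : Letters Q) (α β : ℕ) : Formula :=
  .half (fdisj (.conj (.atom L.wht) (.atom α))
               (.conj (.atom L.shdw) (.neg (.atom (L.tilde β)))))

/-- `ψ_P3`. -/
noncomputable def ψP3 [Fintype Q] [DecidableEq Q] (M : Minsky Q) (L : Letters Q) : Formula :=
  G (fimpl (.atom L.wht)
    (bigConj (((Finset.univ.toList (α := Q)).filter (fun q => decide (q ≠ M.q0))).map
      (fun q => fdisj (.atom (L.ltr (Tag.fr q)))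
                      (φeq L (L.ltr (Tag.fr q)) (L.ltr (Tag.to q)))))))

/-- `ψ_P4`. -/
def ψP4 (L : Letters Q) : Formula :=
  .conj (G (fimpl (.atom (L.ltr (Tag.c1 CV.zero)))
              (φeq L (L.ltr (Tag.i1 Op.inc)) (L.ltr (Tag.i1 Op.dec)))))
    (.conj (G (fimpl (.atom (L.ltr (Tag.c2 CV.zero)))
                (φeq L (L.ltr (Tag.i2 Op.inc)) (L.ltr (Tag.i2 Op.dec)))))
      (.conj (G (fimpl (.atom L.wht)
                  (fiff (.atom (L.ltr (Tag.c1 CV.zero)))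
                        (.neg (.atom (L.ltr (Tag.c1 CV.plus)))))))
             (G (fimpl (.atom L.wht)
                  (fiff (.atom (L.ltr (Tag.c2 CV.zero)))
                        (.neg (.atom (L.ltr (Tag.c2 CV.plus)))))))))

noncomputable def ψMinsky [Fintype Q] [DecidableEq Q] (M : Minsky Q) (L : Letters Q) : Formula :=
  .conj (ψencBasics M L) (.conj (ψP3 M L) (ψP4 L))

/-- The letter `c` is encoded at the set `s` (the label of a white position). -/
def Decodes (L : Letters Q) (c : Config Q) (s : Set ℕ) : Prop :=
  L.wht ∈ s ∧ L.ltr (Tag.fr c.q) ∈ s ∧ L.ltr (Tag.c1 c.f) ∈ s ∧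
  L.ltr (Tag.c2 c.s) ∈ s ∧ L.ltr (Tag.i1 c.fo) ∈ s ∧ L.ltr (Tag.i2 c.so) ∈ s ∧
  L.ltr (Tag.to c.qn) ∈ s

/-- `u = run(w)`: `u` has length `|w|/2` and its `i`-th letter is encoded at the
`i`-th white position of `w`. -/
def EncodesRun (L : Letters Q) (w : Word) (u : List (Config Q)) : Prop :=
  2 * u.length = w.length ∧
  ∀ i (h : i < u.length), Decodes L (u.get ⟨i, h⟩) (w.getD (2 * i) ∅)
section SatLemmas

lemma sat_neg {w : Word} {i φ} : Sat w i (.neg φ) ↔ ¬ Sat w i φ := Iff.rfl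
lemma sat_conj {w : Word} {i φ ψ} : Sat w i (.conj φ ψ) ↔ Sat w i φ ∧ Sat w i ψ := Iff.rfl
lemma sat_atom {w : Word} {i a} : Sat w i (.atom a) ↔ a ∈ w.getD i ∅ := Iff.rfl
lemma sat_fut {w : Word} {i φ} :
    Sat w i (.fut φ) ↔ ∃ j, i ≤ j ∧ j < w.length ∧ Sat w j φ := Iff.rfl
lemma sat_half {w : Word} {i φ} :
    Sat w i (.half φ) ↔ 2 * Set.ncard {j | j < i ∧ Sat w j φ} = i := Iff.rfl

lemma sat_fdisj {w : Word} {i φ ψ} : Sat w i (fdisj φ ψ) ↔ Sat w i φ ∨ Sat w i ψ := by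
  simp only [fdisj, Sat]; tauto

lemma sat_fimpl {w : Word} {i φ ψ} : Sat w i (fimpl φ ψ) ↔ (Sat w i φ → Sat w i ψ) := by
  simp only [fimpl, sat_fdisj, Sat]; tauto

lemma sat_fiff {w : Word} {i φ ψ} : Sat w i (fiff φ ψ) ↔ (Sat w i φ ↔ Sat w i ψ) := by
  simp only [fiff, Sat, sat_fimpl]; tauto

lemma sat_G {w : Word} {i φ} :
    Sat w i (G φ) ↔ ∀ j, i ≤ j → j < w.length → Sat w j φ := by
  simp only [G, Sat]; push_neg; tauto

lemma sat_ftop {w : Word} {i} : Sat w i ftop := by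
  simp only [ftop, Sat]; tauto

lemma not_sat_fbot {w : Word} {i} : ¬ Sat w i fbot := by
  simp only [fbot, Sat]; tauto

lemma sat_bigConj {w : Word} {i l} : Sat w i (bigConj l) ↔ ∀ φ ∈ l, Sat w i φ := by
  induction l with
  | nil => simpa [bigConj] using sat_ftop
  | cons φ l ih =>
    simp only [bigConj, List.foldr_cons, List.mem_cons] at *
    rw [sat_conj, ih]
    constructor
    · rintro ⟨h1, h2⟩ ψ (rfl | hm); exacts [h1, h2 _ hm]
    · intro h; exact ⟨h _ (Or.inl rfl), fun ψ hm => h _ (Or.inr hm)⟩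

lemma sat_bigDisj {w : Word} {i l} : Sat w i (bigDisj l) ↔ ∃ φ ∈ l, Sat w i φ := by
  induction l with
  | nil => simpa [bigDisj] using not_sat_fbot
  | cons φ l ih =>
    simp only [bigDisj, List.foldr_cons, List.mem_cons] at *
    rw [sat_fdisj, ih]
    constructor
    · rintro (h | ⟨ψ, hm, h⟩); exacts [⟨φ, Or.inl rfl, h⟩, ⟨ψ, Or.inr hm, h⟩]
    · rintro ⟨ψ, (rfl | hm), h⟩; exacts [Or.inl h, Or.inr ⟨ψ, hm, h⟩]

end SatLemmas

section Counting
open Finset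

lemma ncard_lt_filter (m : ℕ) (P : ℕ → Prop) [DecidablePred P] :
    {j | j < m ∧ P j}.ncard = ((Finset.range m).filter P).card := by
  rw [← Set.ncard_coe_finset]
  congr 1
  ext j
  simp [Finset.mem_filter, Finset.mem_range]

lemma sat_half_at {w : Word} {i φ} [DecidablePred fun j => Sat w j φ] :
    Sat w i (.half φ) ↔
      2 * ((Finset.range i).filter (fun j => Sat w j φ)).card = i := by
  rw [sat_half, ncard_lt_filter]

lemma filter_range_succ (P : ℕ → Prop) [DecidablePred P] (k : ℕ) :
    ((Finset.range (k+1)).filter P).card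
      = ((Finset.range k).filter P).card + (if P k then 1 else 0) := by
  rw [Finset.range_add_one, Finset.filter_insert]
  split
  · rw [Finset.card_insert_of_notMem (by simp)]
  · simp

lemma filter_range_two_mul (P : ℕ → Prop) [DecidablePred P] (k : ℕ) :
    ((Finset.range (2*k)).filter P).card
      = ((Finset.range k).filter (fun i => P (2*i))).card
        + ((Finset.range k).filter (fun i => P (2*i+1))).card := by
  induction k with
  | zero => simp
  | succ k ih =>
    have h2 : 2 * (k+1) = (2*k+1)+1 := by ring
    rw [h2, filter_range_succ, filter_range_succ, filter_range_succ (fun i => P (2*i)),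
      filter_range_succ (fun i => P (2*i+1)), ih]
    by_cases h0 : P (2*k) <;> by_cases h1 : P (2*k+1) <;> simp [h0, h1] <;> omega

lemma card_evens (m : ℕ) :
    ((Finset.range m).filter (fun j => j % 2 = 0)).card = (m+1)/2 := by
  induction m with
  | zero => simp
  | succ m ih =>
    rw [filter_range_succ, ih]
    by_cases h : m % 2 = 0 <;> simp [h] <;> omega

lemma half_white {w : Word} {φ : Formula} (k : ℕ) (p q : ℕ → Prop)
    [DecidablePred p] [DecidablePred q]
    (h0 : ∀ i < k, (Sat w (2*i) φ ↔ p i)) (h1 : ∀ i < k, (Sat w (2*i+1) φ ↔ ¬ q i)) :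
    (Sat w (2*k) (.half φ) ↔
      ((Finset.range k).filter p).card = ((Finset.range k).filter q).card) := by
  classical
  rw [sat_half_at, filter_range_two_mul]

  have e0 : (Finset.range k).filter (fun i => Sat w (2*i) φ) = (Finset.range k).filter p :=
    Finset.filter_congr (fun i hi => by
      rw [Finset.mem_range] at hi; simp [h0 i hi])
  have e1 : (Finset.range k).filter (fun i => Sat w (2*i+1) φ)
      = (Finset.range k).filter (fun i => ¬ q i) :=
    Finset.filter_congr (fun i hi => by
      rw [Finset.mem_range] at hi; simp [h1 i hi])
  rw [e0, e1]
  have hc := Finset.card_filter_add_card_filter_not (s := Finset.range k) (p := q)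
  have hp := Finset.card_filter_le (Finset.range k) p
  have hq := Finset.card_filter_le (Finset.range k) q
  rw [Finset.card_range] at hc
  omega

end Counting
section WordConstr

variable {Q : Type}

/-- The six Σ_M-letters carried by a white position encoding `c`. -/
def WsetS (L : Letters Q) (c : Config Q) : Set ℕ :=
  {L.ltr (.fr c.q), L.ltr (.c1 c.f), L.ltr (.c2 c.s),
   L.ltr (.i1 c.fo), L.ltr (.i2 c.so), L.ltr (.to c.qn)}

/-- The label of a white position encoding `c`. -/
def Wst (L : Letters Q) (c : Config Q) : Set ℕ := insert L.wht (WsetS L c)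

/-- The label of a shadow position whose white partner encodes `c`. -/
def Sst (L : Letters Q) (c : Config Q) : Set ℕ := insert L.shdw (L.tilde '' WsetS L c)

/-- The encoding word of a run. -/
def wrd (M : Minsky Q) (L : Letters Q) (u : List (Config Q)) : Word :=
  (List.range (2 * u.length)).map
    (fun j => if j % 2 = 0 then Wst L (u.getD (j/2) (dflt M))
              else Sst L (u.getD (j/2) (dflt M)))

lemma wrd_length (M : Minsky Q) (L : Letters Q) (u : List (Config Q)) :
    (wrd M L u).length = 2 * u.length := by simp [wrd]

lemma wrd_getD (M : Minsky Q) (L : Letters Q) (u : List (Config Q)) {j : ℕ}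
    (hj : j < 2 * u.length) :
    (wrd M L u).getD j ∅
      = if j % 2 = 0 then Wst L (u.getD (j/2) (dflt M)) else Sst L (u.getD (j/2) (dflt M)) := by
  have hlen : j < (wrd M L u).length := by rw [wrd_length]; exact hj
  rw [List.getD_eq_getElem _ _ hlen]
  simp [wrd]

lemma exists_tag_of_mem_WsetS {L : Letters Q} {c : Config Q} {a : ℕ}
    (h : a ∈ WsetS L c) : ∃ t, a = L.ltr t := by
  simp only [WsetS, Set.mem_insert_iff, Set.mem_singleton_iff] at h
  rcases h with h|h|h|h|h|h <;> exact ⟨_, h⟩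

lemma mem_WsetS_ltr {L : Letters Q} {c : Config Q} {t : Tag Q} :
    L.ltr t ∈ WsetS L c ↔
      (t = .fr c.q ∨ t = .c1 c.f ∨ t = .c2 c.s ∨ t = .i1 c.fo ∨ t = .i2 c.so ∨ t = .to c.qn) := by
  simp [WsetS, L.ltr_inj.eq_iff]

lemma wht_mem_Wst {L : Letters Q} {c : Config Q} : L.wht ∈ Wst L c := Set.mem_insert _ _

lemma wht_not_mem_Sst {L : Letters Q} {c : Config Q} : L.wht ∉ Sst L c := by
  rintro (h | ⟨x, hx, hxe⟩)
  · exact L.wht_ne_shdw h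
  · obtain ⟨t, rfl⟩ := exists_tag_of_mem_WsetS hx
    exact L.tilde_ne_wht t hxe

lemma shdw_mem_Sst {L : Letters Q} {c : Config Q} : L.shdw ∈ Sst L c := Set.mem_insert _ _

lemma shdw_not_mem_Wst {L : Letters Q} {c : Config Q} : L.shdw ∉ Wst L c := by
  rintro (h | h)
  · exact L.wht_ne_shdw h.symm
  · obtain ⟨t, ht⟩ := exists_tag_of_mem_WsetS h
    exact L.ltr_ne_shdw t ht.symm

lemma ltr_mem_Wst {L : Letters Q} {c : Config Q} {t : Tag Q} :
    L.ltr t ∈ Wst L c ↔ L.ltr t ∈ WsetS L c := by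
  constructor
  · rintro (h | h)
    · exact absurd h (L.ltr_ne_wht t)
    · exact h
  · exact fun h => Set.mem_insert_of_mem _ h

lemma ltr_not_mem_Sst {L : Letters Q} {c : Config Q} {t : Tag Q} :
    L.ltr t ∉ Sst L c := by
  rintro (h | ⟨x, hx, hxe⟩)
  · exact L.ltr_ne_shdw t h
  · obtain ⟨t', rfl⟩ := exists_tag_of_mem_WsetS hx
    exact L.tilde_ne_ltr t' t hxe

lemma tilde_not_mem_Wst {L : Letters Q} {c : Config Q} {t : Tag Q} :
    L.tilde (L.ltr t) ∉ Wst L c := by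
  rintro (h | h)
  · exact L.tilde_ne_wht t h
  · obtain ⟨t', ht'⟩ := exists_tag_of_mem_WsetS h
    exact L.tilde_ne_ltr t t' ht'

lemma tilde_mem_Sst {L : Letters Q} {c : Config Q} {t : Tag Q} :
    L.tilde (L.ltr t) ∈ Sst L c ↔ L.ltr t ∈ WsetS L c := by
  constructor
  · rintro (h | ⟨x, hx, hxe⟩)
    · exact absurd h (L.tilde_ne_shdw t)
    · obtain ⟨t', rfl⟩ := exists_tag_of_mem_WsetS hx
      rw [L.tilde_inj t' t hxe] at hx
      exact hx
  · intro h
    exact Set.mem_insert_of_mem _ ⟨_, h, rfl⟩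

end WordConstr
section PosSat

variable {Q : Type} (M : Minsky Q) (L : Letters Q) (u : List (Config Q))

lemma sat_wht_iff {j : ℕ} (hj : j < 2 * u.length) :
    Sat (wrd M L u) j (.atom L.wht) ↔ j % 2 = 0 := by
  rw [sat_atom, wrd_getD M L u hj]
  by_cases h : j % 2 = 0 <;> simp [h, wht_mem_Wst, wht_not_mem_Sst]

lemma sat_shdw_iff {j : ℕ} (hj : j < 2 * u.length) :
    Sat (wrd M L u) j (.atom L.shdw) ↔ j % 2 = 1 := by
  rw [sat_atom, wrd_getD M L u hj]
  by_cases h : j % 2 = 0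
  · simp [h, shdw_not_mem_Wst]
  · simp [h, shdw_mem_Sst]
    omega

lemma sat_ltr_iff {j : ℕ} (hj : j < 2 * u.length) (t : Tag Q) :
    Sat (wrd M L u) j (.atom (L.ltr t)) ↔
      j % 2 = 0 ∧ L.ltr t ∈ WsetS L (u.getD (j/2) (dflt M)) := by
  rw [sat_atom, wrd_getD M L u hj]
  by_cases h : j % 2 = 0 <;> simp [h, ltr_mem_Wst, ltr_not_mem_Sst]

lemma sat_tilde_iff {j : ℕ} (hj : j < 2 * u.length) (t : Tag Q) :
    Sat (wrd M L u) j (.atom (L.tilde (L.ltr t))) ↔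
      j % 2 = 1 ∧ L.ltr t ∈ WsetS L (u.getD (j/2) (dflt M)) := by
  rw [sat_atom, wrd_getD M L u hj]
  by_cases h : j % 2 = 0
  · have h1 : ¬ (j % 2 = 1) := by omega
    simp [h, h1, tilde_not_mem_Wst]
  · have h1 : j % 2 = 1 := by omega
    simp [h, h1, tilde_mem_Sst]

lemma sat_ltr_white {i : ℕ} (hi : i < u.length) (t : Tag Q) :
    Sat (wrd M L u) (2*i) (.atom (L.ltr t)) ↔ L.ltr t ∈ WsetS L (u.getD i (dflt M)) := by
  have h2 : (2*i) % 2 = 0 := by omega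
  have h3 : (2*i) / 2 = i := by omega
  rw [sat_ltr_iff M L u (by omega) t, h2, h3]
  simp

lemma sat_tilde_shadow {i : ℕ} (hi : i < u.length) (t : Tag Q) :
    Sat (wrd M L u) (2*i+1) (.atom (L.tilde (L.ltr t))) ↔
      L.ltr t ∈ WsetS L (u.getD i (dflt M)) := by
  have h2 : (2*i+1) % 2 = 1 := by omega
  have h3 : (2*i+1) / 2 = i := by omega
  rw [sat_tilde_iff M L u (by omega) t, h2, h3]
  simp

lemma sat_half_wht {i : ℕ} (hi : i ≤ 2 * u.length) :
    Sat (wrd M L u) i (.half (.atom L.wht)) ↔ i % 2 = 0 := by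
  classical
  rw [sat_half_at]
  have e : (Finset.range i).filter (fun j => Sat (wrd M L u) j (.atom L.wht))
      = (Finset.range i).filter (fun j => j % 2 = 0) :=
    Finset.filter_congr (fun j hj => by
      rw [Finset.mem_range] at hj
      simp [sat_wht_iff M L u (lt_of_lt_of_le hj hi)])
  rw [e, card_evens]
  omega

lemma sat_ψshadowy (hn : 0 < u.length) :
    Sat (wrd M L u) 0 (ψshadowy L.wht L.shdw) := by
  have hlen := wrd_length M L u
  refine ⟨⟨?_, ?_, ?_⟩, ?_⟩
  · exact (sat_wht_iff M L u (by omega)).mpr (by norm_num)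
  · rw [sat_G]
    intro j _ hj
    rw [hlen] at hj
    rw [sat_fiff, sat_neg, sat_wht_iff M L u hj, sat_shdw_iff M L u hj]
    omega
  · rw [sat_G]
    intro j _ hj
    rw [hlen] at hj
    rw [sat_fimpl, sat_wht_iff M L u hj]
    intro hw
    rw [sat_fut]
    refine ⟨j+1, by omega, by rw [hlen]; omega, ?_⟩
    rw [sat_shdw_iff M L u (by omega)]
    omega
  · rw [sat_G]
    intro j _ hj
    rw [hlen] at hj
    rw [sat_fiff, sat_half_wht M L u (by omega), sat_wht_iff M L u hj]

open Classical in
lemma sat_φeq (α β : Tag Q) {k : ℕ} (hk : k ≤ u.length) :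
    Sat (wrd M L u) (2*k) (φeq L (L.ltr α) (L.ltr β)) ↔
      ((Finset.range k).filter (fun i => L.ltr α ∈ WsetS L (u.getD i (dflt M)))).card
        = ((Finset.range k).filter (fun i => L.ltr β ∈ WsetS L (u.getD i (dflt M)))).card := by
  classical
  rw [φeq, half_white k (fun i => L.ltr α ∈ WsetS L (u.getD i (dflt M)))
    (fun i => L.ltr β ∈ WsetS L (u.getD i (dflt M))) ?_ ?_]
  · intro i hi
    have hji : 2*i < 2*u.length := by omega
    have h2 : (2*i) % 2 = 0 := by omega
    have h3 : (2*i) / 2 = i := by omega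
    rw [sat_fdisj, sat_conj, sat_conj, sat_neg, sat_wht_iff M L u hji, sat_shdw_iff M L u hji,
      sat_ltr_iff M L u hji α, sat_tilde_iff M L u hji β]
    simp [h2, h3]
  · intro i hi
    have hji : 2*i+1 < 2*u.length := by omega
    have h2 : (2*i+1) % 2 = 1 := by omega
    have h3 : (2*i+1) / 2 = i := by omega
    rw [sat_fdisj, sat_conj, sat_conj, sat_neg, sat_wht_iff M L u hji, sat_shdw_iff M L u hji,
      sat_ltr_iff M L u hji α, sat_tilde_iff M L u hji β]
    simp [h2, h3]

lemma sat_φlast_iff (hn : 0 < u.length) {j : ℕ} (hj : j < 2 * u.length) :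
    Sat (wrd M L u) j (φlast L.shdw) ↔ j = 2*u.length - 1 := by
  have hlen := wrd_length M L u
  rw [φlast, sat_G]
  constructor
  · intro h
    by_contra hne
    have h2 := h (2*(u.length-1)) (by omega) (by rw [hlen]; omega)
    rw [sat_shdw_iff M L u (by omega)] at h2
    omega
  · rintro rfl j' hj' hlt
    rw [hlen] at hlt
    rw [sat_shdw_iff M L u hlt]
    omega

lemma sat_φstl_iff (hn : 0 < u.length) {j : ℕ} (hj : j < 2 * u.length) :
    Sat (wrd M L u) j (φstl L.wht L.shdw) ↔ j = 2*u.length - 2 := by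
  have hlen := wrd_length M L u
  rw [φstl, sat_conj, sat_G, sat_wht_iff M L u hj]
  constructor
  · rintro ⟨hev, h⟩
    by_contra hne
    have h2 := h (j+1) (by omega) (by rw [hlen]; omega)
    rw [sat_fdisj, sat_wht_iff M L u (by omega), sat_φlast_iff M L u hn (by omega)] at h2
    omega
  · rintro rfl
    refine ⟨by omega, fun j' hj' hlt => ?_⟩
    rw [hlen] at hlt
    rw [sat_fdisj, sat_wht_iff M L u hlt, sat_φlast_iff M L u hn hlt]
    omega

lemma sat_φtransfer (hn : 0 < u.length) (t : Tag Q) :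
    Sat (wrd M L u) 0 (φtransfer L.wht L.shdw (L.ltr t) (L.tilde (L.ltr t))) := by
  have hlen := wrd_length M L u
  refine ⟨sat_ψshadowy M L u hn, ?_, ?_, ?_, ?_⟩
  · rw [sat_G]
    intro j _ hj
    rw [hlen] at hj
    rw [sat_fimpl, sat_ltr_iff M L u hj, sat_wht_iff M L u hj]
    tauto
  · rw [sat_G]
    intro j _ hj
    rw [hlen] at hj
    rw [sat_fimpl, sat_tilde_iff M L u hj, sat_shdw_iff M L u hj]
    tauto
  · rw [sat_G]
    intro j _ hj
    rw [hlen] at hj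
    rw [sat_fimpl, sat_wht_iff M L u hj]
    intro hje
    obtain ⟨k, rfl⟩ : ∃ k, j = 2*k := ⟨j/2, by omega⟩
    have := (sat_φeq M L u t t (k := k) (by omega)).mpr rfl
    exact this
  · rw [sat_fiff, sat_fut, sat_fut]
    constructor
    · rintro ⟨j, -, hlt, hstl, hσ⟩
      rw [hlen] at hlt
      rw [sat_φstl_iff M L u hn hlt] at hstl
      have hje : j = 2*(u.length - 1) := by omega
      subst hje
      refine ⟨2*(u.length-1)+1, by omega, by rw [hlen]; omega, ?_, ?_⟩
      · rw [sat_φlast_iff M L u hn (by omega)]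
        omega
      · rw [sat_tilde_shadow M L u (by omega) t]
        rw [sat_ltr_white M L u (by omega) t] at hσ
        exact hσ
    · rintro ⟨j, -, hlt, hlast, hσt⟩
      rw [hlen] at hlt
      rw [sat_φlast_iff M L u hn hlt] at hlast
      have hje : j = 2*(u.length - 1)+1 := by omega
      subst hje
      refine ⟨2*(u.length-1), by omega, by rw [hlen]; omega, ?_, ?_⟩
      · rw [sat_φstl_iff M L u hn (by omega)]
        omega
      · rw [sat_ltr_white M L u (by omega) t]
        rw [sat_tilde_shadow M L u (by omega) t] at hσt
        exact hσt

end PosSat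
section MainParts

variable {Q : Type} (M : Minsky Q) (L : Letters Q) (u : List (Config Q))

lemma mem_fr {c : Config Q} {q : Q} : L.ltr (.fr q) ∈ WsetS L c ↔ c.q = q := by
  rw [mem_WsetS_ltr]; simp [eq_comm]

lemma mem_to {c : Config Q} {q : Q} : L.ltr (.to q) ∈ WsetS L c ↔ c.qn = q := by
  rw [mem_WsetS_ltr]; simp [eq_comm]

lemma mem_c1 {c : Config Q} {v : CV} : L.ltr (.c1 v) ∈ WsetS L c ↔ c.f = v := by
  rw [mem_WsetS_ltr]; simp [eq_comm]

lemma mem_c2 {c : Config Q} {v : CV} : L.ltr (.c2 v) ∈ WsetS L c ↔ c.s = v := by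
  rw [mem_WsetS_ltr]; simp [eq_comm]

lemma mem_i1 {c : Config Q} {o : Op} : L.ltr (.i1 o) ∈ WsetS L c ↔ c.fo = o := by
  rw [mem_WsetS_ltr]; simp [eq_comm]

lemma mem_i2 {c : Config Q} {o : Op} : L.ltr (.i2 o) ∈ WsetS L c ↔ c.so = o := by
  rw [mem_WsetS_ltr]; simp [eq_comm]

lemma sat_ψtruly [Fintype Q] (hn : 0 < u.length) : Sat (wrd M L u) 0 (ψtruly L) := by
  rw [ψtruly, sat_bigConj]
  intro φ hφ
  rcases List.mem_cons.mp hφ with rfl | hφ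
  · exact sat_ψshadowy M L u hn
  · rw [List.mem_map] at hφ
    obtain ⟨σ, hσ, rfl⟩ := hφ
    rw [SigMlist, List.mem_map] at hσ
    obtain ⟨t, -, rfl⟩ := hσ
    exact sat_φtransfer M L u hn t

lemma sat_ψP1 (hn : 0 < u.length) (h1 : P1 M u) : Sat (wrd M L u) 0 (ψP1 M L) := by
  obtain ⟨hq, hf, hs⟩ := h1
  refine ⟨?_, ?_, ?_⟩
  · exact (sat_ltr_white M L u (i := 0) hn _).mpr ((mem_fr L).mpr hq)
  · exact (sat_ltr_white M L u (i := 0) hn _).mpr ((mem_c1 L).mpr hf)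
  · exact (sat_ltr_white M L u (i := 0) hn _).mpr ((mem_c2 L).mpr hs)

lemma sat_ψP2a [Fintype Q] (h2 : P2 M u) : Sat (wrd M L u) 0 (ψP2a M L) := by
  rw [ψP2a, sat_G]
  intro j _ hj
  rw [wrd_length] at hj
  rw [sat_fimpl, sat_wht_iff M L u hj]
  intro hje
  obtain ⟨k, rfl⟩ : ∃ k, j = 2*k := ⟨j/2, by omega⟩
  have hk : k < u.length := by omega
  set c := u.getD k (dflt M) with hc
  rw [sat_bigDisj]
  refine ⟨bigConj [Formula.atom (L.ltr (.fr c.q)), Formula.atom (L.ltr (.c1 c.f)),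
      Formula.atom (L.ltr (.c2 c.s)), Formula.atom (L.ltr (.i1 (M.δ c.q c.f c.s).1)),
      Formula.atom (L.ltr (.i2 (M.δ c.q c.f c.s).2.1)),
      Formula.atom (L.ltr (.to (M.δ c.q c.f c.s).2.2))], ?_, ?_⟩
  · simp only [List.mem_flatMap, List.mem_map]
    exact ⟨c.q, by simp, c.f, by cases c.f <;> simp [cvList], c.s,
      by cases c.s <;> simp [cvList], rfl⟩
  · have hδ : M.δ c.q c.f c.s = (c.fo, c.so, c.qn) := h2 k hk
    rw [sat_bigConj]
    intro φ hφ
    simp only [List.mem_cons, List.not_mem_nil, or_false] at hφ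
    rcases hφ with rfl|rfl|rfl|rfl|rfl|rfl
    · exact (sat_ltr_white M L u hk _).mpr ((mem_fr L).mpr rfl)
    · exact (sat_ltr_white M L u hk _).mpr ((mem_c1 L).mpr rfl)
    · exact (sat_ltr_white M L u hk _).mpr ((mem_c2 L).mpr rfl)
    · exact (sat_ltr_white M L u hk _).mpr ((mem_i1 L).mpr (by rw [hδ]))
    · exact (sat_ltr_white M L u hk _).mpr ((mem_i2 L).mpr (by rw [hδ]))
    · exact (sat_ltr_white M L u hk _).mpr ((mem_to L).mpr (by rw [hδ]))

lemma list_map_disjoint {α β : Type} (f : α → Tag Q) (g : β → Tag Q)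
    (l1 : List α) (l2 : List β) (h : ∀ a b, f a ≠ g b) :
    (l1.map f).Disjoint (l2.map g) := by
  intro x hx hy
  rw [List.mem_map] at hx hy
  obtain ⟨a, -, rfl⟩ := hx
  obtain ⟨b, -, hb⟩ := hy
  exact h a b hb.symm

lemma nodup_tagList [Fintype Q] : (tagList Q).Nodup := by
  have hQ : (Finset.univ.toList (α := Q)).Nodup := Finset.nodup_toList _
  have h1 : ((Finset.univ.toList (α := Q)).map Tag.fr).Nodup :=
    hQ.map (fun a b h => by injection h)
  have h2 : ((Finset.univ.toList (α := Q)).map Tag.to).Nodup :=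
    hQ.map (fun a b h => by injection h)
  have h3 : (cvList.map (Tag.c1 (Q := Q))).Nodup := by simp [cvList]
  have h4 : (cvList.map (Tag.c2 (Q := Q))).Nodup := by simp [cvList]
  have h5 : (opList.map (Tag.i1 (Q := Q))).Nodup := by simp [opList]
  have h6 : (opList.map (Tag.i2 (Q := Q))).Nodup := by simp [opList]
  have ne : ∀ {α β : Type} (f : α → Tag Q) (g : β → Tag Q), (∀ a b, f a ≠ g b) →
      ∀ (l1 : List α) (l2 : List β), (l1.map f).Disjoint (l2.map g) :=
    fun f g h l1 l2 => list_map_disjoint f g l1 l2 h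
  rw [tagList]
  refine List.Nodup.append (List.Nodup.append (List.Nodup.append
    (List.Nodup.append (List.Nodup.append h1 h2 ?_) h3 ?_) h4 ?_) h5 ?_) h6 ?_ <;>
    (try simp only [List.disjoint_append_left])
  · exact ne _ _ (fun a b h => by simp at h) _ _
  · exact ⟨ne _ _ (fun a b h => by simp at h) _ _, ne _ _ (fun a b h => by simp at h) _ _⟩
  · exact ⟨⟨ne _ _ (fun a b h => by simp at h) _ _, ne _ _ (fun a b h => by simp at h) _ _⟩,
      ne _ _ (fun a b h => by simp at h) _ _⟩
  · exact ⟨⟨⟨ne _ _ (fun a b h => by simp at h) _ _, ne _ _ (fun a b h => by simp at h) _ _⟩,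
      ne _ _ (fun a b h => by simp at h) _ _⟩, ne _ _ (fun a b h => by simp at h) _ _⟩
  · exact ⟨⟨⟨⟨ne _ _ (fun a b h => by simp at h) _ _, ne _ _ (fun a b h => by simp at h) _ _⟩,
      ne _ _ (fun a b h => by simp at h) _ _⟩, ne _ _ (fun a b h => by simp at h) _ _⟩,
      ne _ _ (fun a b h => by simp at h) _ _⟩

lemma nodup_SigMlist [Fintype Q] : (SigMlist L).Nodup :=
  (nodup_tagList (Q := Q)).map L.ltr_inj

lemma sat_ψP2b [Fintype Q] : Sat (wrd M L u) 0 (ψP2b L) := by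
  classical
  rw [ψP2b, sat_G]
  intro j _ hj
  rw [wrd_length] at hj
  rw [sat_bigConj]
  intro φ hφ
  rw [List.mem_map] at hφ
  obtain ⟨l, hl, rfl⟩ := hφ
  rw [List.mem_sublistsLen] at hl
  obtain ⟨hsub, hlen7⟩ := hl
  rw [sat_neg, sat_bigConj]
  intro hall
  have htag : ∀ a ∈ l, ∃ t : Tag Q, a = L.ltr t := by
    intro a ha
    have haS := hsub.subset ha
    rw [SigMlist, List.mem_map] at haS
    obtain ⟨t, -, rfl⟩ := haS
    exact ⟨t, rfl⟩
  by_cases hje : j % 2 = 0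
  · obtain ⟨k, rfl⟩ : ∃ k, j = 2*k := ⟨j/2, by omega⟩
    have hk : k < u.length := by omega
    set c := u.getD k (dflt M) with hc
    set F : Finset ℕ := {L.ltr (.fr c.q), L.ltr (.c1 c.f), L.ltr (.c2 c.s),
      L.ltr (.i1 c.fo), L.ltr (.i2 c.so), L.ltr (.to c.qn)} with hF
    have hmem : ∀ a ∈ l, a ∈ F := by
      intro a ha
      obtain ⟨t, rfl⟩ := htag a ha
      have hs := hall (.atom (L.ltr t)) (List.mem_map_of_mem (f := Formula.atom) ha)
      have hw := (sat_ltr_white M L u hk t).mp hs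
      rw [← hc] at hw
      simp only [WsetS, Set.mem_insert_iff, Set.mem_singleton_iff] at hw
      simp only [hF, Finset.mem_insert, Finset.mem_singleton]
      exact hw
    have hnd : l.Nodup := hsub.nodup (nodup_SigMlist L)
    have hcard : l.toFinset.card = 7 := by
      rw [List.toFinset_card_of_nodup hnd, hlen7]
    have hsubf : l.toFinset ⊆ F := fun a ha => hmem a (List.mem_toFinset.mp ha)
    have hle := Finset.card_le_card hsubf
    have c1 := Finset.card_insert_le (L.ltr (.fr c.q))
      ({L.ltr (.c1 c.f), L.ltr (.c2 c.s), L.ltr (.i1 c.fo), L.ltr (.i2 c.so), L.ltr (.to c.qn)} : Finset ℕ)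
    have c2 := Finset.card_insert_le (L.ltr (.c1 c.f))
      ({L.ltr (.c2 c.s), L.ltr (.i1 c.fo), L.ltr (.i2 c.so), L.ltr (.to c.qn)} : Finset ℕ)
    have c3 := Finset.card_insert_le (L.ltr (.c2 c.s))
      ({L.ltr (.i1 c.fo), L.ltr (.i2 c.so), L.ltr (.to c.qn)} : Finset ℕ)
    have c4 := Finset.card_insert_le (L.ltr (.i1 c.fo))
      ({L.ltr (.i2 c.so), L.ltr (.to c.qn)} : Finset ℕ)
    have c5 := Finset.card_insert_le (L.ltr (.i2 c.so))
      ({L.ltr (.to c.qn)} : Finset ℕ)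
    have c6 : ({L.ltr (.to c.qn)} : Finset ℕ).card = 1 := Finset.card_singleton _
    rw [hF] at hle
    omega
  · have hne : l ≠ [] := by intro h; rw [h] at hlen7; simp at hlen7
    obtain ⟨a, ha⟩ := List.exists_mem_of_ne_nil l hne
    obtain ⟨t, rfl⟩ := htag a ha
    have hs := hall (.atom (L.ltr t)) (List.mem_map_of_mem (f := Formula.atom) ha)
    rw [sat_ltr_iff M L u hj t] at hs
    exact hje hs.1

end MainParts
section FinalParts

variable {Q : Type} (M : Minsky Q) (L : Letters Q) (u : List (Config Q))

lemma count_to_from [DecidableEq Q] (h1 : P1 M u) (h3 : P3 M u) {q : Q} (hq : q ≠ M.q0)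
    {k : ℕ} (hk : k < u.length) :
    ((Finset.range k).filter (fun i => (u.getD i (dflt M)).qn = q)).card
      = ((Finset.range k).filter (fun i => (u.getD i (dflt M)).q = q)).card
        + (if (u.getD k (dflt M)).q = q then 1 else 0) := by
  induction k with
  | zero =>
    simp only [Finset.range_zero, Finset.filter_empty, Finset.card_empty]
    rw [h1.1, if_neg (Ne.symm hq)]
  | succ k ih =>
    have hk' : k < u.length := by omega
    rw [filter_range_succ, filter_range_succ, ih hk', h3 k hk]

lemma sum_fo (k : ℕ) :
    (∑ j ∈ Finset.range k, opVal (u.getD j (dflt M)).fo)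
      = (((Finset.range k).filter (fun i => (u.getD i (dflt M)).fo = Op.inc)).card : ℤ)
        - (((Finset.range k).filter (fun i => (u.getD i (dflt M)).fo = Op.dec)).card : ℤ) := by
  induction k with
  | zero => simp
  | succ k ih =>
    rw [Finset.sum_range_succ, ih, filter_range_succ, filter_range_succ]
    cases h : (u.getD k (dflt M)).fo <;> simp [h, opVal] <;> omega

lemma sum_so (k : ℕ) :
    (∑ j ∈ Finset.range k, opVal (u.getD j (dflt M)).so)
      = (((Finset.range k).filter (fun i => (u.getD i (dflt M)).so = Op.inc)).card : ℤ)
        - (((Finset.range k).filter (fun i => (u.getD i (dflt M)).so = Op.dec)).card : ℤ) := by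
  induction k with
  | zero => simp
  | succ k ih =>
    rw [Finset.sum_range_succ, ih, filter_range_succ, filter_range_succ]
    cases h : (u.getD k (dflt M)).so <;> simp [h, opVal] <;> omega

lemma sat_ψP3 [Fintype Q] [DecidableEq Q] (h1 : P1 M u) (h3 : P3 M u) :
    Sat (wrd M L u) 0 (ψP3 M L) := by
  classical
  rw [ψP3, sat_G]
  intro j _ hj
  rw [wrd_length] at hj
  rw [sat_fimpl, sat_wht_iff M L u hj]
  intro hje
  obtain ⟨k, rfl⟩ : ∃ k, j = 2*k := ⟨j/2, by omega⟩
  have hk : k < u.length := by omega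
  rw [sat_bigConj]
  intro φ hφ
  rw [List.mem_map] at hφ
  obtain ⟨q, hqmem, rfl⟩ := hφ
  have hq : q ≠ M.q0 := by
    have := (List.mem_filter.mp hqmem).2
    simpa using this
  rw [sat_fdisj]
  by_cases hcq : (u.getD k (dflt M)).q = q
  · exact Or.inl ((sat_ltr_white M L u hk _).mpr ((mem_fr L).mpr hcq))
  · refine Or.inr ?_
    rw [sat_φeq M L u (.fr q) (.to q) hk.le]
    have e1 : ((Finset.range k).filter
          (fun i => L.ltr (Tag.fr q) ∈ WsetS L (u.getD i (dflt M)))).card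
        = ((Finset.range k).filter (fun i => (u.getD i (dflt M)).q = q)).card := by
      congr 1
      exact Finset.filter_congr (fun i _ => by rw [mem_fr])
    have e2 : ((Finset.range k).filter
          (fun i => L.ltr (Tag.to q) ∈ WsetS L (u.getD i (dflt M)))).card
        = ((Finset.range k).filter (fun i => (u.getD i (dflt M)).qn = q)).card := by
      congr 1
      exact Finset.filter_congr (fun i _ => by rw [mem_to])
    rw [e1, e2, count_to_from M u h1 h3 hq hk, if_neg hcq]
    omega

lemma sat_ψP4 [DecidableEq Q] (h4 : P4 M u) : Sat (wrd M L u) 0 (ψP4 L) := by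
  classical
  refine ⟨?_, ?_, ?_, ?_⟩
  · rw [sat_G]
    intro j _ hj
    rw [wrd_length] at hj
    rw [sat_fimpl, sat_ltr_iff M L u hj]
    rintro ⟨hje, hmem⟩
    obtain ⟨k, rfl⟩ : ∃ k, j = 2*k := ⟨j/2, by omega⟩
    have hk : k < u.length := by omega
    have hdiv : (2*k) / 2 = k := by omega
    rw [hdiv] at hmem
    have hf : (u.getD k (dflt M)).f = CV.zero := (mem_c1 L).mp hmem
    rw [sat_φeq M L u (.i1 .inc) (.i1 .dec) hk.le]
    have e1 : ((Finset.range k).filter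
          (fun i => L.ltr (Tag.i1 Op.inc) ∈ WsetS L (u.getD i (dflt M)))).card
        = ((Finset.range k).filter (fun i => (u.getD i (dflt M)).fo = Op.inc)).card := by
      congr 1
      exact Finset.filter_congr (fun i _ => by rw [mem_i1])
    have e2 : ((Finset.range k).filter
          (fun i => L.ltr (Tag.i1 Op.dec) ∈ WsetS L (u.getD i (dflt M)))).card
        = ((Finset.range k).filter (fun i => (u.getD i (dflt M)).fo = Op.dec)).card := by
      congr 1
      exact Finset.filter_congr (fun i _ => by rw [mem_i1])
    rw [e1, e2]
    have hsum := (h4 k hk).1.mp hf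
    rw [sum_fo M u k] at hsum
    omega
  · rw [sat_G]
    intro j _ hj
    rw [wrd_length] at hj
    rw [sat_fimpl, sat_ltr_iff M L u hj]
    rintro ⟨hje, hmem⟩
    obtain ⟨k, rfl⟩ : ∃ k, j = 2*k := ⟨j/2, by omega⟩
    have hk : k < u.length := by omega
    have hdiv : (2*k) / 2 = k := by omega
    rw [hdiv] at hmem
    have hf : (u.getD k (dflt M)).s = CV.zero := (mem_c2 L).mp hmem
    rw [sat_φeq M L u (.i2 .inc) (.i2 .dec) hk.le]
    have e1 : ((Finset.range k).filter
          (fun i => L.ltr (Tag.i2 Op.inc) ∈ WsetS L (u.getD i (dflt M)))).card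
        = ((Finset.range k).filter (fun i => (u.getD i (dflt M)).so = Op.inc)).card := by
      congr 1
      exact Finset.filter_congr (fun i _ => by rw [mem_i2])
    have e2 : ((Finset.range k).filter
          (fun i => L.ltr (Tag.i2 Op.dec) ∈ WsetS L (u.getD i (dflt M)))).card
        = ((Finset.range k).filter (fun i => (u.getD i (dflt M)).so = Op.dec)).card := by
      congr 1
      exact Finset.filter_congr (fun i _ => by rw [mem_i2])
    rw [e1, e2]
    have hsum := (h4 k hk).2.mp hf
    rw [sum_so M u k] at hsum
    omega
  · rw [sat_G]
    intro j _ hj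
    rw [wrd_length] at hj
    rw [sat_fimpl, sat_wht_iff M L u hj]
    intro hje
    obtain ⟨k, rfl⟩ : ∃ k, j = 2*k := ⟨j/2, by omega⟩
    have hk : k < u.length := by omega
    rw [sat_fiff, sat_neg, sat_ltr_white M L u hk (.c1 .zero),
      sat_ltr_white M L u hk (.c1 .plus), mem_c1, mem_c1]
    cases hv : (u.getD k (dflt M)).f <;> simp [hv]
  · rw [sat_G]
    intro j _ hj
    rw [wrd_length] at hj
    rw [sat_fimpl, sat_wht_iff M L u hj]
    intro hje
    obtain ⟨k, rfl⟩ : ∃ k, j = 2*k := ⟨j/2, by omega⟩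
    have hk : k < u.length := by omega
    rw [sat_fiff, sat_neg, sat_ltr_white M L u hk (.c2 .zero),
      sat_ltr_white M L u hk (.c2 .plus), mem_c2, mem_c2]
    cases hv : (u.getD k (dflt M)).s <;> simp [hv]

end FinalParts
theorem run_has_encoding_word [Fintype Q] [DecidableEq Q]
    (M : Minsky Q) (L : Letters Q) (u : List (Config Q)) (hu : IsRun M u) :
    ∃ w : Word, Sat w 0 (ψMinsky M L) ∧ EncodesRun L w u := by
  obtain ⟨hne, h1, h2, h3, h4⟩ := hu
  have hn : 0 < u.length := List.length_pos_iff.mpr hne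
  refine ⟨wrd M L u,
    ⟨⟨sat_ψtruly M L u hn, sat_ψP1 M L u hn h1, sat_ψP2a M L u h2, sat_ψP2b M L u⟩,
      sat_ψP3 M L u h1 h3, sat_ψP4 M L u h4⟩, ?_, ?_⟩
  · rw [wrd_length]
  · intro i hi
    have hgd : (wrd M L u).getD (2*i) ∅ = Wst L (u.getD i (dflt M)) := by
      rw [wrd_getD M L u (by omega)]
      have h2i : (2*i) % 2 = 0 := by omega
      have h2d : (2*i) / 2 = i := by omega
      rw [if_pos h2i, h2d]
    have hget : u.get ⟨i, hi⟩ = u.getD i (dflt M) := by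
      rw [List.getD_eq_getElem _ _ hi]
      rfl
    rw [hgd, hget]
    exact ⟨wht_mem_Wst, ltr_mem_Wst.mpr ((mem_fr L).mpr rfl),
      ltr_mem_Wst.mpr ((mem_c1 L).mpr rfl), ltr_mem_Wst.mpr ((mem_c2 L).mpr rfl),
      ltr_mem_Wst.mpr ((mem_i1 L).mpr rfl), ltr_mem_Wst.mpr ((mem_i2 L).mpr rfl),
      ltr_mem_Wst.mpr ((mem_to L).mpr rfl)⟩

end Minsky15
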